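/- Let m ≥ 1 and 1 ≤ N ≤ m be natural numbers, let μ be the product over Fin m of the uniform probability measure on [0,1] ⊂ ℝ, and let 𝔖 be a nonempty family of subsets of Fin m each of cardinality N. Then the expectation under μ of the function ω ↦ min_{S ∈ 𝔖} Σ_{i ∈ S} ω(i) is at least Σ_{k=1}^{N} k/(m+1) = N(N+1)/(2(m+1)). -/

import Mathlib

open MeasureTheory Finset


lemma beta_nat : ∀ (b a : ℕ), ∫ x in (0:ℝ)..1, x^a * (1-x)^b
    = (a.factorial * b.factorial : ℝ) / (a + b + 1).factorial := by
  intro b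
  induction b with
  | zero =>
    intro a
    have h : ((a+1).factorial : ℝ) = (a+1) * a.factorial := by
      rw [Nat.factorial_succ]; push_cast; ring
    simp [_root_.integral_pow, h]
    rw [eq_div_iff (by positivity)]
    field_simp
  | succ b ih =>
    intro a
    have hu : ∀ x ∈ Set.uIcc (0:ℝ) 1, HasDerivAt (fun x : ℝ => (1-x)^(b+1))
        (-((b+1 : ℕ) : ℝ) * (1-x)^b) x := by
      intro x _
      have := ((hasDerivAt_id x).const_sub 1).fun_pow (b+1)
      simpa using this.congr_deriv (by simp; ring)
    have hv : ∀ x ∈ Set.uIcc (0:ℝ) 1, HasDerivAt (fun x : ℝ => x^(a+1) / (a+1))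
        (x^a) x := by
      intro x _
      have := (hasDerivAt_pow (a+1) x).div_const ((a:ℝ)+1)
      simpa using this.congr_deriv (by field_simp; simp)
    have hiu : IntervalIntegrable (fun x : ℝ => -((b+1 : ℕ) : ℝ) * (1-x)^b) volume 0 1 :=
      (Continuous.intervalIntegrable (by continuity) 0 1)
    have hiv : IntervalIntegrable (fun x : ℝ => x^a) volume 0 1 :=
      (Continuous.intervalIntegrable (by continuity) 0 1)
    have parts := intervalIntegral.integral_mul_deriv_eq_deriv_mul hu hv hiu hiv
    have e1 : ∫ x in (0:ℝ)..1, x^a * (1-x)^(b+1)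
        = ((b+1 : ℕ) : ℝ)/((a:ℝ)+1) * ∫ x in (0:ℝ)..1, x^(a+1) * (1-x)^b := by
      rw [show (∫ x in (0:ℝ)..1, x^a * (1-x)^(b+1))
          = ∫ x in (0:ℝ)..1, (1-x)^(b+1) * x^a by
        apply intervalIntegral.integral_congr; intro x _; ring]
      rw [parts]
      rw [show (∫ x in (0:ℝ)..1, -((b+1 : ℕ) : ℝ) * (1-x)^b * (x^(a+1)/((a:ℝ)+1)))
          = -(((b+1 : ℕ) : ℝ)/((a:ℝ)+1)) * ∫ x in (0:ℝ)..1, x^(a+1) * (1-x)^b by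
        rw [← intervalIntegral.integral_const_mul]
        apply intervalIntegral.integral_congr; intro x _; field_simp]
      simp
    rw [e1, ih (a+1)]
    have h1 : ((a+1).factorial : ℝ) = (a+1) * a.factorial := by
      rw [Nat.factorial_succ]; push_cast; ring
    have h2 : ((b+1).factorial : ℝ) = (b+1) * b.factorial := by
      rw [Nat.factorial_succ]; push_cast; ring
    have h3 : (a + 1 + b + 1) = (a + (b+1) + 1) := by ring
    rw [h3] at *
    push_cast [h1, h2]
    have : ((a:ℝ)+1) ≠ 0 := by positivity
    field_simp

noncomputable def nu : Measure ℝ := volume.restrict (Set.Icc (0:ℝ) 1)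

instance : SigmaFinite nu := by unfold nu; infer_instance

instance : IsProbabilityMeasure nu := ⟨by simp [nu, Measure.restrict_apply_univ]⟩

lemma nu_Iic (t : ℝ) (ht : t ∈ Set.Icc (0:ℝ) 1) : nu (Set.Iic t) = ENNReal.ofReal t := by
  rw [nu, Measure.restrict_apply measurableSet_Iic]
  rw [show Set.Iic t ∩ Set.Icc 0 1 = Set.Icc 0 t by
    ext x; simp only [Set.mem_inter_iff, Set.mem_Iic, Set.mem_Icc]
    constructor
    · rintro ⟨h1, h2, _⟩; exact ⟨h2, h1⟩
    · rintro ⟨h1, h2⟩; exact ⟨h2, h1, le_trans h2 ht.2⟩]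
  rw [Real.volume_Icc]; ring_nf

lemma nu_Ioi (t : ℝ) (ht : t ∈ Set.Icc (0:ℝ) 1) : nu (Set.Ioi t) = ENNReal.ofReal (1 - t) := by
  rw [nu, Measure.restrict_apply measurableSet_Ioi]
  rw [show Set.Ioi t ∩ Set.Icc 0 1 = Set.Ioc t 1 by
    ext x; simp only [Set.mem_inter_iff, Set.mem_Ioi, Set.mem_Icc, Set.mem_Ioc]
    constructor
    · rintro ⟨h1, _, h3⟩; exact ⟨h1, h3⟩
    · rintro ⟨h1, h2⟩; exact ⟨h1, le_trans ht.1 h1.le, h2⟩]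
  rw [Real.volume_Ioc]

lemma measure_filter_eq (m : ℕ) (t : ℝ) (ht : t ∈ Set.Icc (0:ℝ) 1) (A : Finset (Fin m)) :
    (Measure.pi fun _ : Fin m => nu) {ω | univ.filter (fun i => ω i ≤ t) = A}
      = ENNReal.ofReal t ^ A.card * ENNReal.ofReal (1-t) ^ (m - A.card) := by
  have hset : {ω : Fin m → ℝ | univ.filter (fun i => ω i ≤ t) = A}
      = Set.univ.pi (fun i => if i ∈ A then Set.Iic t else Set.Ioi t) := by
    ext ω
    simp only [Set.mem_setOf_eq, Set.mem_pi, Set.mem_univ, forall_true_left, Finset.ext_iff,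
      Finset.mem_filter, Finset.mem_univ, true_and]
    constructor
    · intro h i
      by_cases hi : i ∈ A
      · simpa [hi] using (h i).mpr hi
      · simpa [hi] using lt_of_not_ge fun hle => hi ((h i).mp hle)
    · intro h i
      by_cases hi : i ∈ A
      · simpa [hi] using h i
      · have := h i; simp only [hi, if_false, Set.mem_Ioi] at this
        simp [hi, not_le.mpr this]
  rw [hset, Measure.pi_pi]
  rw [← Finset.prod_sdiff (Finset.subset_univ A)]
  have h1 : ∏ i ∈ A, nu (if i ∈ A then Set.Iic t else Set.Ioi t) = ENNReal.ofReal t ^ A.card := by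
    rw [Finset.prod_congr rfl (fun i hi => by rw [if_pos hi]), Finset.prod_const, nu_Iic t ht]
  have h2 : ∏ i ∈ univ \ A, nu (if i ∈ A then Set.Iic t else Set.Ioi t)
      = ENNReal.ofReal (1-t) ^ (m - A.card) := by
    rw [Finset.prod_congr rfl (fun i hi => by
      rw [if_neg (Finset.mem_sdiff.mp hi).2]), Finset.prod_const, nu_Ioi t ht,
      Finset.card_sdiff_of_subset (Finset.subset_univ A)]
    simp
  rw [h1, h2, mul_comm]

noncomputable def cnt (m : ℕ) (t : ℝ) (ω : Fin m → ℝ) : ℕ := (univ.filter fun i => ω i ≤ t).card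

lemma cnt_eq_sum (m : ℕ) (t : ℝ) (ω : Fin m → ℝ) :
    cnt m t ω = ∑ i : Fin m, if ω i ≤ t then 1 else 0 := by
  rw [cnt, Finset.card_filter]

lemma meas_cnt (m : ℕ) : Measurable fun p : (Fin m → ℝ) × ℝ => cnt m p.2 p.1 := by
  simp only [cnt_eq_sum]
  apply Finset.measurable_sum
  intro i _
  apply Measurable.ite _ measurable_const measurable_const
  exact measurableSet_le (measurable_fst.eval) measurable_snd

lemma meas_cnt_omega (m : ℕ) (t : ℝ) : Measurable fun ω : Fin m → ℝ => cnt m t ω :=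
  (meas_cnt m).comp (measurable_id.prodMk measurable_const)

lemma meas_cnt_t (m : ℕ) (ω : Fin m → ℝ) : Measurable fun t : ℝ => cnt m t ω :=
  (meas_cnt m).comp (measurable_const.prodMk measurable_id)

lemma cnt_le (m : ℕ) (t : ℝ) (ω : Fin m → ℝ) : cnt m t ω ≤ m :=
  le_trans (Finset.card_filter_le _ _) (by simp)

lemma meas_set_filter (m : ℕ) (t : ℝ) (A : Finset (Fin m)) :
    MeasurableSet {ω : Fin m → ℝ | univ.filter (fun i => ω i ≤ t) = A} := by
  have : {ω : Fin m → ℝ | univ.filter (fun i => ω i ≤ t) = A}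
      = ⋂ i, {ω : Fin m → ℝ | ω i ≤ t ↔ i ∈ A} := by
    ext ω
    simp only [Set.mem_setOf_eq, Set.mem_iInter, Finset.ext_iff, Finset.mem_filter,
      Finset.mem_univ, true_and]
  rw [this]
  apply MeasurableSet.iInter
  intro i
  have : {ω : Fin m → ℝ | ω i ≤ t ↔ i ∈ A} =
      if i ∈ A then {ω : Fin m → ℝ | ω i ≤ t} else {ω : Fin m → ℝ | ω i ≤ t}ᶜ := by
    by_cases hi : i ∈ A <;> simp [hi, Set.ext_iff]
  rw [this]
  have hle : MeasurableSet {ω : Fin m → ℝ | ω i ≤ t} :=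
    measurableSet_le (measurable_pi_apply i) measurable_const
  split <;> [exact hle; exact hle.compl]

lemma measure_cnt_eq (m : ℕ) (t : ℝ) (ht : t ∈ Set.Icc (0:ℝ) 1) (k : ℕ) :
    (Measure.pi fun _ : Fin m => nu) {ω | cnt m t ω = k}
      = (m.choose k) * (ENNReal.ofReal t ^ k * ENNReal.ofReal (1-t) ^ (m - k)) := by
  have hun : {ω : Fin m → ℝ | cnt m t ω = k}
      = ⋃ A ∈ powersetCard k (univ : Finset (Fin m)),
          {ω : Fin m → ℝ | univ.filter (fun i => ω i ≤ t) = A} := by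
    ext ω
    simp only [Set.mem_setOf_eq, Set.mem_iUnion, Finset.mem_powersetCard, cnt]
    constructor
    · intro h
      exact ⟨univ.filter (fun i => ω i ≤ t), ⟨⟨Finset.subset_univ _, h⟩, rfl⟩⟩
    · rintro ⟨A, ⟨⟨-, hA⟩, rfl⟩⟩; exact hA
  rw [hun, measure_biUnion_finset]
  · rw [Finset.sum_congr rfl (fun A hA => by
      rw [measure_filter_eq m t ht A, (Finset.mem_powersetCard.mp hA).2])]
    rw [Finset.sum_const, Finset.card_powersetCard, Finset.card_univ, Fintype.card_fin,
      nsmul_eq_mul]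
  · intro A hA B hB hAB
    simp only [Function.onFun, Set.disjoint_left]
    intro ω h1 h2
    exact hAB (h1 ▸ h2 ▸ rfl)
  · exact fun A _ => meas_set_filter m t A

lemma inner_lintegral (m N : ℕ) (t : ℝ) (ht : t ∈ Set.Icc (0:ℝ) 1) :
    ∫⁻ ω, ((min N (cnt m t ω) : ℕ) : ENNReal) ∂(Measure.pi fun _ : Fin m => nu)
      = ∑ k ∈ range (m+1), ((min N k : ℕ) : ENNReal) * ((m.choose k)
          * (ENNReal.ofReal t ^ k * ENNReal.ofReal (1-t) ^ (m - k))) := by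
  have hdecomp : ∀ ω : Fin m → ℝ, ((min N (cnt m t ω) : ℕ) : ENNReal)
      = ∑ k ∈ range (m+1), Set.indicator {ω' | cnt m t ω' = k}
          (fun _ => ((min N k : ℕ) : ENNReal)) ω := by
    intro ω
    rw [Finset.sum_congr rfl (fun k _ => Set.indicator_apply _ _ _)]
    simp only [Set.mem_setOf_eq]
    rw [Finset.sum_ite_eq (range (m+1)) (cnt m t ω) (fun k => ((min N k : ℕ) : ENNReal))]
    rw [if_pos (Finset.mem_range.mpr (Nat.lt_succ_of_le (cnt_le m t ω)))]
  simp only [hdecomp]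
  rw [lintegral_finset_sum]
  · apply Finset.sum_congr rfl
    intro k _
    have hms : MeasurableSet {ω' : Fin m → ℝ | cnt m t ω' = k} :=
      meas_cnt_omega m t (measurableSet_singleton k)
    rw [lintegral_indicator hms, setLIntegral_const, measure_cnt_eq m t ht k, mul_comm]
  · intro k _
    exact measurable_const.indicator (meas_cnt_omega m t (measurableSet_singleton k))

lemma t_lintegral (m k : ℕ) (hk : k ≤ m) :
    ∫⁻ t in Set.Icc (0:ℝ) 1, ENNReal.ofReal t ^ k * ENNReal.ofReal (1-t) ^ (m - k)
      = ENNReal.ofReal ((k.factorial * (m-k).factorial : ℝ) / (m + 1).factorial) := by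
  have hcong : ∫⁻ t in Set.Icc (0:ℝ) 1, ENNReal.ofReal t ^ k * ENNReal.ofReal (1-t) ^ (m - k)
      = ∫⁻ t in Set.Icc (0:ℝ) 1, ENNReal.ofReal (t ^ k * (1-t) ^ (m - k)) := by
    apply setLIntegral_congr_fun measurableSet_Icc
    intro t ht
    dsimp only
    rw [ENNReal.ofReal_mul (pow_nonneg ht.1 k), ENNReal.ofReal_pow ht.1,
      ENNReal.ofReal_pow (by linarith [ht.2])]
  rw [hcong]
  have hint : IntegrableOn (fun t : ℝ => t ^ k * (1-t) ^ (m - k)) (Set.Icc 0 1) volume :=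
    (Continuous.integrableOn_Icc (by continuity))
  rw [← ofReal_integral_eq_lintegral_ofReal hint ((ae_restrict_iff' measurableSet_Icc).mpr
    (ae_of_all _ (fun t ht => mul_nonneg (pow_nonneg ht.1 k)
      (pow_nonneg (by linarith [ht.2]) _))))]
  congr 1
  rw [MeasureTheory.integral_Icc_eq_integral_Ioc,
    ← intervalIntegral.integral_of_le (zero_le_one), beta_nat (m-k) k,
    show k + (m - k) + 1 = m + 1 from by omega]

lemma meas_filter_card_t (m : ℕ) (S : Finset (Fin m)) (ω : Fin m → ℝ) :
    Measurable fun t : ℝ => ((S.filter fun i => ω i ≤ t).card : ℝ) := by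
  have : ∀ t : ℝ, ((S.filter fun i => ω i ≤ t).card : ℝ)
      = ∑ i ∈ S, if ω i ≤ t then (1:ℝ) else 0 := by
    intro t; rw [Finset.card_filter]; push_cast; rfl
  simp only [this]
  apply Finset.measurable_sum
  intro i _
  exact Measurable.ite (measurableSet_le measurable_const measurable_id)
    measurable_const measurable_const

lemma pointwise_bound (m N : ℕ) (S : Finset (Fin m)) (hS : S.card = N)
    (ω : Fin m → ℝ) (hω : ∀ i, ω i ∈ Set.Icc (0:ℝ) 1) :
    (N : ℝ) - ∑ i ∈ S, ω i ≤ ∫ t in Set.Icc (0:ℝ) 1, ((min N (cnt m t ω) : ℕ) : ℝ) := by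
  -- step 1: N - ∑ = ∫ card (S.filter (ω · ≤ t))
  have key : (N : ℝ) - ∑ i ∈ S, ω i
      = ∫ t in Set.Icc (0:ℝ) 1, ((S.filter fun i => ω i ≤ t).card : ℝ) := by
    have h1 : ∀ t : ℝ, ((S.filter fun i => ω i ≤ t).card : ℝ)
        = ∑ i ∈ S, Set.indicator (Set.Ici (ω i)) (fun _ => (1:ℝ)) t := by
      intro t
      rw [Finset.card_filter]
      push_cast
      apply Finset.sum_congr rfl
      intro i _
      simp [Set.indicator_apply, Set.mem_Ici]
    simp only [h1]
    rw [integral_finset_sum]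
    · have h2 : ∀ i ∈ S, ∫ t in Set.Icc (0:ℝ) 1, Set.indicator (Set.Ici (ω i))
          (fun _ => (1:ℝ)) t = 1 - ω i := by
        intro i _
        rw [integral_indicator_const (1:ℝ) measurableSet_Ici]
        rw [measureReal_def, Measure.restrict_apply measurableSet_Ici]
        rw [show Set.Ici (ω i) ∩ Set.Icc 0 1 = Set.Icc (ω i) 1 by
          ext x
          simp only [Set.mem_inter_iff, Set.mem_Ici, Set.mem_Icc]
          exact ⟨fun ⟨h1, _, h3⟩ => ⟨h1, h3⟩,
            fun ⟨h1, h2⟩ => ⟨h1, le_trans (hω i).1 h1, h2⟩⟩]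
        rw [Real.volume_Icc, smul_eq_mul, mul_one, ENNReal.toReal_ofReal (by linarith [(hω i).2])]
      rw [Finset.sum_congr rfl h2, Finset.sum_sub_distrib, Finset.sum_const, hS]
      simp [mul_comm]
    · intro i _
      exact (integrable_const (1:ℝ)).indicator measurableSet_Ici
  rw [key]
  apply integral_mono_of_nonneg (ae_of_all _ (fun t => by positivity))
  · -- integrability of min
    apply Integrable.mono' (integrable_const (N:ℝ))
    · exact ((measurable_from_top (f := fun n : ℕ => ((min N n : ℕ) : ℝ))).comp (meas_cnt_t m ω)).aestronglyMeasurable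
    · apply ae_of_all
      intro t
      simp only [Real.norm_natCast]
      exact_mod_cast Nat.cast_le.mpr (min_le_left _ _)
  · apply ae_of_all
    intro t
    have hsub : (S.filter fun i => ω i ≤ t).card ≤ min N (cnt m t ω) := by
      apply le_min
      · exact hS ▸ Finset.card_le_card (Finset.filter_subset _ _)
      · exact Finset.card_le_card (Finset.filter_subset_filter _ (Finset.subset_univ S))
    show ((S.filter fun i => ω i ≤ t).card : ℝ) ≤ ((min N (cnt m t ω) : ℕ) : ℝ)
    exact_mod_cast hsub

lemma int_min (m N : ℕ) (ω : Fin m → ℝ) :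
    Integrable (fun t => ((min N (cnt m t ω) : ℕ) : ℝ)) (volume.restrict (Set.Icc (0:ℝ) 1)) := by
  apply Integrable.mono' (integrable_const (N:ℝ))
  · exact ((measurable_from_top (f := fun n : ℕ => ((min N n : ℕ) : ℝ))).comp
      (meas_cnt_t m ω)).aestronglyMeasurable
  · apply ae_of_all
    intro t
    simp only [Real.norm_natCast]
    exact_mod_cast Nat.cast_le.mpr (min_le_left _ _)

lemma measurable_inf' {β : Type*} (s : Finset β) (hs : s.Nonempty)
    (f : β → (Fin m → ℝ) → ℝ) (hf : ∀ b, Measurable (f b)) :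
    Measurable fun x => s.inf' hs fun b => f b x := by
  induction hs using Finset.Nonempty.cons_induction with
  | singleton a => simp only [Finset.inf'_singleton]; exact hf a
  | cons a t hat ht ih =>
    have : (fun x => (Finset.cons a t hat).inf' (Finset.cons_nonempty hat) fun b => f b x)
        = fun x => min (f a x) (t.inf' ht fun b => f b x) := by
      funext x
      rw [Finset.inf'_cons]
    rw [this]
    exact (hf a).min ih

lemma choose_beta (m k : ℕ) (hk : k ≤ m) :
    (m.choose k : ℝ) * ((k.factorial * (m-k).factorial : ℝ) / (m + 1).factorial)
      = 1 / (m + 1) := by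
  have h : ((m.choose k * k.factorial * (m-k).factorial : ℕ) : ℝ) = (m.factorial : ℝ) := by
    exact_mod_cast congrArg Nat.cast (Nat.choose_mul_factorial_mul_factorial hk)
  push_cast at h
  have h2 : ((m+1).factorial : ℝ) = (m+1) * m.factorial := by
    rw [Nat.factorial_succ]; push_cast; ring
  rw [h2, mul_div_assoc', ← mul_assoc, h]
  have hm : (0:ℝ) < m.factorial := by positivity
  have hm1 : (0:ℝ) < (m:ℝ) + 1 := by positivity
  rw [mul_comm ((m:ℝ)+1) _, ← div_div, div_self hm.ne']

lemma sum_min_nat (m N : ℕ) (hN : N ≤ m) :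
    ∑ k ∈ range (m+1), min N k = (∑ k ∈ range (N+1), k) + (m - N) * N := by
  rw [Finset.range_eq_Ico, ← Finset.sum_Ico_consecutive _ (Nat.zero_le (N+1)) (by omega)]
  congr 1
  · rw [← Finset.range_eq_Ico]
    exact Finset.sum_congr rfl fun k hk => min_eq_right (by
      exact Nat.lt_succ_iff.mp (Finset.mem_range.mp hk))
  · rw [Finset.sum_congr rfl (fun k hk => min_eq_left (by
      have := (Finset.mem_Ico.mp hk).1; omega))]
    rw [Finset.sum_const, Nat.card_Ico, smul_eq_mul]
    congr 1
    omega

lemma gauss_real (N : ℕ) : ∑ k ∈ Finset.Icc 1 N, (k : ℝ) = N * (N + 1) / 2 := by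
  induction N with
  | zero => simp
  | succ n ih =>
    rw [Finset.sum_Icc_succ_top (by omega), ih]
    push_cast; ring

lemma gauss_icc (N : ℕ) : ∑ k ∈ range (N+1), k = ∑ k ∈ Finset.Icc 1 N, k := by
  have : range (N+1) = insert 0 (Finset.Icc 1 N) := by
    ext k; simp [Finset.mem_range, Finset.mem_Icc]; omega
  have h0 : (0:ℕ) ∉ Finset.Icc 1 N := by simp
  rw [this, Finset.sum_insert h0, Nat.zero_add]

/-- Lower bound for the expected minimum weight over a family `𝔖` of
`N`-element subsets of `Fin m`, with i.i.d. uniform weights on `[0,1]`: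
the expectation of `min_{S ∈ 𝔖} ∑_{i ∈ S} ω i` is at least
`∑_{k=1}^N k/(m+1) = N(N+1)/(2(m+1))`. -/
theorem stmt_4 (m N : ℕ) (hm : 1 ≤ m) (hN1 : 1 ≤ N) (hN : N ≤ m)
    (𝔖 : Finset (Finset (Fin m))) (h𝔖 : 𝔖.Nonempty)
    (hcard : ∀ S ∈ 𝔖, S.card = N) :
    (∑ k ∈ Finset.Icc 1 N, (k : ℝ) / (m + 1)) ≤
      (∫ ω : Fin m → ℝ, 𝔖.inf' h𝔖 (fun S => ∑ i ∈ S, ω i)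
        ∂(Measure.pi fun _ : Fin m => volume.restrict (Set.Icc (0 : ℝ) 1))) ∧
    ∑ k ∈ Finset.Icc 1 N, (k : ℝ) / (m + 1) = N * (N + 1) / (2 * (m + 1)) := by
  have hm1 : ((m:ℝ) + 1) ≠ 0 := by positivity
  have hsecond : ∑ k ∈ Finset.Icc 1 N, (k : ℝ) / (m + 1) = N * (N + 1) / (2 * (m + 1)) := by
    rw [← Finset.sum_div, gauss_real]
    field_simp
  refine ⟨?_, hsecond⟩
  set μ : Measure (Fin m → ℝ) := Measure.pi fun _ : Fin m => nu with hμ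
  show ∑ k ∈ Finset.Icc 1 N, (k : ℝ) / (m + 1) ≤ ∫ ω, 𝔖.inf' h𝔖 (fun S => ∑ i ∈ S, ω i) ∂μ
  haveI : IsProbabilityMeasure μ := by rw [hμ]; infer_instance
  set F : (Fin m → ℝ) → ℝ := fun ω => 𝔖.inf' h𝔖 (fun S => ∑ i ∈ S, ω i) with hF
  -- a.e. all coordinates in [0,1]
  have hae : ∀ᵐ ω ∂μ, ∀ i, ω i ∈ Set.Icc (0:ℝ) 1 := by
    have hmeas : MeasurableSet (Set.univ.pi fun _ : Fin m => Set.Icc (0:ℝ) 1) :=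
      MeasurableSet.univ_pi fun _ => measurableSet_Icc
    have h1 : μ (Set.univ.pi fun _ : Fin m => Set.Icc (0:ℝ) 1) = 1 := by
      rw [hμ, Measure.pi_pi]
      have : nu (Set.Icc (0:ℝ) 1) = 1 := by
        rw [nu, Measure.restrict_apply_self]; simp
      simp [this]
    have h0 : μ (Set.univ.pi fun _ : Fin m => Set.Icc (0:ℝ) 1)ᶜ = 0 := by
      rw [measure_compl hmeas (measure_ne_top _ _), h1, measure_univ, tsub_self]
    refine MeasureTheory.ae_iff.mpr (measure_mono_null ?_ h0)
    intro ω hω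
    simp only [Set.mem_setOf_eq, Set.mem_compl_iff, Set.mem_pi, Set.mem_univ,
      forall_true_left] at *
    exact fun h => hω fun i => h i
  obtain ⟨S0, hS0⟩ := id h𝔖
  have hFmeas : Measurable F := by
    apply measurable_inf'
    intro S
    exact Finset.measurable_sum S fun i _ => measurable_pi_apply i
  have hbound : ∀ ω : Fin m → ℝ, (∀ i, ω i ∈ Set.Icc (0:ℝ) 1) → 0 ≤ F ω ∧ F ω ≤ N := by
    intro ω hω
    constructor
    · exact Finset.le_inf' h𝔖 _ fun S _ => Finset.sum_nonneg fun i _ => (hω i).1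
    · calc F ω ≤ ∑ i ∈ S0, ω i := Finset.inf'_le _ hS0
        _ ≤ ∑ i ∈ S0, 1 := Finset.sum_le_sum fun i _ => (hω i).2
        _ = N := by rw [Finset.sum_const, hcard S0 hS0]; simp
  have hFint : Integrable F μ := by
    apply Integrable.mono' (integrable_const (N:ℝ)) hFmeas.aestronglyMeasurable
    filter_upwards [hae] with ω hω
    rw [Real.norm_eq_abs, abs_le]
    exact ⟨by linarith [(hbound ω hω).1, Nat.cast_nonneg (α := ℝ) N], (hbound ω hω).2⟩
  -- reduce to bounding N - ∫ F
  suffices hkey : (N:ℝ) - ∫ ω, F ω ∂μ ≤ (N:ℝ) - ∑ k ∈ Finset.Icc 1 N, (k : ℝ) / (m + 1) by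
    linarith
  have hsub : (N:ℝ) - ∫ ω, F ω ∂μ = ∫ ω, ((N:ℝ) - F ω) ∂μ := by
    rw [integral_sub (integrable_const _) hFint, integral_const, probReal_univ]
    simp
  rw [hsub]
  have hψmeas : AEStronglyMeasurable (fun ω => (N:ℝ) - F ω) μ :=
    (measurable_const.sub hFmeas).aestronglyMeasurable
  have hψnn : 0 ≤ᵐ[μ] fun ω => (N:ℝ) - F ω := by
    filter_upwards [hae] with ω hω
    have := (hbound ω hω).2
    simp only [Pi.zero_apply]
    linarith
  rw [integral_eq_lintegral_of_nonneg_ae hψnn hψmeas]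
  set B : ℝ := ∑ k ∈ range (m+1), ((min N k : ℕ) : ℝ) * (1/((m:ℝ)+1)) with hB
  have hBnn : 0 ≤ B := Finset.sum_nonneg fun k _ => by positivity
  -- pointwise a.e. bound by inner lintegral
  have hptwise : ∀ᵐ ω ∂μ, ENNReal.ofReal ((N:ℝ) - F ω)
      ≤ ∫⁻ t in Set.Icc (0:ℝ) 1, ((min N (cnt m t ω) : ℕ) : ENNReal) := by
    filter_upwards [hae] with ω hω
    have h2 : (N:ℝ) - (∫ t in Set.Icc (0:ℝ) 1, ((min N (cnt m t ω) : ℕ) : ℝ)) ≤ F ω := by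
      rw [hF]
      exact Finset.le_inf' h𝔖 _ fun S hS => by
        linarith [pointwise_bound m N S (hcard S hS) ω hω]
    calc ENNReal.ofReal ((N:ℝ) - F ω)
        ≤ ENNReal.ofReal (∫ t in Set.Icc (0:ℝ) 1, ((min N (cnt m t ω) : ℕ) : ℝ)) :=
          ENNReal.ofReal_le_ofReal (by linarith)
      _ = ∫⁻ t in Set.Icc (0:ℝ) 1, ENNReal.ofReal (((min N (cnt m t ω) : ℕ) : ℝ)) :=
          ofReal_integral_eq_lintegral_ofReal (int_min m N ω)
            (ae_of_all _ fun t => Nat.cast_nonneg _)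
      _ = ∫⁻ t in Set.Icc (0:ℝ) 1, ((min N (cnt m t ω) : ℕ) : ENNReal) :=
          lintegral_congr fun t => ENNReal.ofReal_natCast _
  have step1 : ∫⁻ ω, ENNReal.ofReal ((N:ℝ) - F ω) ∂μ
      ≤ ∫⁻ ω, (∫⁻ t in Set.Icc (0:ℝ) 1, ((min N (cnt m t ω) : ℕ) : ENNReal)) ∂μ :=
    lintegral_mono_ae hptwise
  have hswap : ∫⁻ ω, (∫⁻ t in Set.Icc (0:ℝ) 1, ((min N (cnt m t ω) : ℕ) : ENNReal)) ∂μ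
      = ∫⁻ t in Set.Icc (0:ℝ) 1, ∫⁻ ω, ((min N (cnt m t ω) : ℕ) : ENNReal) ∂μ := by
    apply lintegral_lintegral_swap
    apply Measurable.aemeasurable
    exact (measurable_from_top (f := fun n : ℕ => ((min N n : ℕ) : ENNReal))).comp (meas_cnt m)
  have hinner : ∫⁻ t in Set.Icc (0:ℝ) 1, ∫⁻ ω, ((min N (cnt m t ω) : ℕ) : ENNReal) ∂μ
      = ∫⁻ t in Set.Icc (0:ℝ) 1, ∑ k ∈ range (m+1), (((min N k : ℕ) : ENNReal) * (m.choose k))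
          * (ENNReal.ofReal t ^ k * ENNReal.ofReal (1-t) ^ (m - k)) := by
    apply setLIntegral_congr_fun measurableSet_Icc
    intro t ht
    dsimp only
    rw [hμ, inner_lintegral m N t ht]
    exact Finset.sum_congr rfl fun k _ => by ring
  have hmk : ∀ k : ℕ, Measurable fun t : ℝ =>
      ENNReal.ofReal t ^ k * ENNReal.ofReal (1-t) ^ (m-k) := fun k =>
    ((ENNReal.measurable_ofReal.comp measurable_id).pow_const k).mul
      ((ENNReal.measurable_ofReal.comp (measurable_const.sub measurable_id)).pow_const (m-k))
  have hpull : ∫⁻ t in Set.Icc (0:ℝ) 1, ∑ k ∈ range (m+1),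
        (((min N k : ℕ) : ENNReal) * (m.choose k))
          * (ENNReal.ofReal t ^ k * ENNReal.ofReal (1-t) ^ (m - k))
      = ∑ k ∈ range (m+1), (((min N k : ℕ) : ENNReal) * (m.choose k))
          * ENNReal.ofReal ((k.factorial * (m-k).factorial : ℝ) / (m + 1).factorial) := by
    rw [lintegral_finset_sum _ (fun k _ => ((hmk k).const_mul _))]
    exact Finset.sum_congr rfl fun k hk => by
      rw [lintegral_const_mul _ (hmk k), t_lintegral m k (Nat.lt_succ_iff.mp (mem_range.mp hk))]
  have hfinal : ∑ k ∈ range (m+1), (((min N k : ℕ) : ENNReal) * (m.choose k))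
          * ENNReal.ofReal ((k.factorial * (m-k).factorial : ℝ) / (m + 1).factorial)
      = ENNReal.ofReal B := by
    rw [hB, ENNReal.ofReal_sum_of_nonneg (fun k _ => by positivity)]
    apply Finset.sum_congr rfl
    intro k hk
    have hkm : k ≤ m := Nat.lt_succ_iff.mp (mem_range.mp hk)
    rw [← ENNReal.ofReal_natCast ((min N k : ℕ)), ← ENNReal.ofReal_natCast (m.choose k),
      ← ENNReal.ofReal_mul (Nat.cast_nonneg _), ← ENNReal.ofReal_mul (by positivity)]
    congr 1
    rw [mul_assoc, choose_beta m k hkm]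
  -- combine
  have hchain : ∫⁻ ω, ENNReal.ofReal ((N:ℝ) - F ω) ∂μ ≤ ENNReal.ofReal B := by
    rw [← hfinal, ← hpull, ← hinner, ← hswap]
    exact step1
  have htoReal : (∫⁻ ω, ENNReal.ofReal ((N:ℝ) - F ω) ∂μ).toReal ≤ B := by
    have := ENNReal.toReal_mono ENNReal.ofReal_ne_top hchain
    rwa [ENNReal.toReal_ofReal hBnn] at this
  refine le_trans htoReal ?_
  -- final arithmetic: B = N - target
  have hBsum : (∑ k ∈ range (m+1), ((min N k : ℕ) : ℝ))
      = ((∑ k ∈ Finset.Icc 1 N, k : ℕ) : ℝ) + ((m - N : ℕ) : ℝ) * N := by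
    rw [← gauss_icc N]
    exact_mod_cast congrArg (Nat.cast (R := ℝ)) (sum_min_nat m N hN)
  have hBeq : B = (((∑ k ∈ Finset.Icc 1 N, k : ℕ) : ℝ) + ((m - N : ℕ) : ℝ) * N) / ((m:ℝ)+1) := by
    rw [hB, ← Finset.sum_mul, hBsum]
    ring
  have hsumIcc : ((∑ k ∈ Finset.Icc 1 N, k : ℕ) : ℝ) = (N:ℝ) * (N + 1) / 2 := by
    rw [Nat.cast_sum]
    exact gauss_real N
  have hmn : ((m - N : ℕ) : ℝ) = (m:ℝ) - N := Nat.cast_sub hN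
  rw [hBeq, hsumIcc, hmn, hsecond]
  apply le_of_eq
  field_simp
  ring
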